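/- Let F be a field of characteristic zero, let a, d ∈ F be such that a + n·d ≠ 0 for every integer n, and let f : F → F be an SD map with f(a) = a, f(a + d) = a + d, and f(d) = d. Then f(a + n·d) = a + n·d for every integer n. -/

import Mathlib

/-- A function `f : F → F` on a field `F` is an *SD map* if for all `x ≠ y` one has
`f x ≠ f y` and `f ((x+y)/(x-y)) = (f x + f y) / (f x - f y)`. -/
def IsSDMap {F : Type*} [Field F] (f : F → F) : Prop :=
  ∀ ⦃x y : F⦄, x ≠ y →
    f x ≠ f y ∧ f ((x + y) / (x - y)) = (f x + f y) / (f x - f y)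

private lemma sd_aux_div {F : Type*} [Field F] (p q : F) (hq : q ≠ 0) (hpq : p ≠ q) :
    (p / q + 1) / (p / q - 1) = (p + q) / (p - q) := by
  have h1 : p - q ≠ 0 := sub_ne_zero.mpr hpq
  have h2 : p / q - 1 ≠ 0 := by
    rw [div_sub_one hq]
    exact div_ne_zero h1 hq
  rw [div_eq_div_iff h2 h1]
  field_simp

/-- The AP lemma: an SD map fixing two consecutive terms and the common difference of
an arithmetic progression avoiding `0` fixes the whole progression. -/
theorem sd_map_fixes_arithmetic_progression {F : Type*} [Field F] [CharZero F]
    (f : F → F) (hf : IsSDMap f) (a d : F)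
    (hne : ∀ n : ℤ, a + (n : F) * d ≠ 0)
    (ha : f a = a) (had : f (a + d) = a + d) (hd : f d = d) :
    ∀ n : ℤ, f (a + (n : F) * d) = a + (n : F) * d := by
  by_cases hd0 : d = 0
  · intro n; simp [hd0, ha]
  have h20 : (2 : F) ≠ 0 := by norm_num
  have key : ∀ X Y : F, X = Y → f Y = Y → f X = X := by
    rintro X Y rfl h; exact h
  -- Basic nonvanishing facts
  have ha0 : a ≠ 0 := by simpa using hne 0
  have had' : a ≠ d := by
    intro h; apply hne (-1); push_cast; rw [← h]; ring
  -- f 0 = 0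
  have h1n1 : (1 : F) ≠ -1 := by
    intro h
    exact h20 (by linear_combination h)
  have f0 : f 0 = 0 := by
    obtain ⟨hi1, he1⟩ := hf h1n1
    obtain ⟨hi2, he2⟩ := hf h1n1.symm
    have e1 : ((1 : F) + -1) / (1 - -1) = 0 := by norm_num
    have e2 : ((-1 : F) + 1) / (-1 - 1) = 0 := by norm_num
    rw [e1] at he1
    rw [e2] at he2
    have hsub : f 1 - f (-1) ≠ 0 := sub_ne_zero.mpr hi1
    have hsub2 : f (-1) - f 1 ≠ 0 := sub_ne_zero.mpr hi2
    have hAB : (f 1 + f (-1)) / (f 1 - f (-1)) = (f (-1) + f 1) / (f (-1) - f 1) :=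
      he1.symm.trans he2
    rw [div_eq_div_iff hsub hsub2] at hAB
    have hsum : f 1 + f (-1) = 0 := by
      have h2 : (f 1 + f (-1)) * ((2 : F) * (f (-1) - f 1)) = 0 := by linear_combination hAB
      rcases mul_eq_zero.mp h2 with h | h
      · exact h
      · exact absurd h (mul_ne_zero h20 hsub2)
    rw [he1, hsum, zero_div]
  -- f 1 = 1
  have f1 : f 1 = 1 := by
    obtain ⟨hi, he⟩ := hf (one_ne_zero (α := F))
    rw [f0] at hi he
    have e : ((1 : F) + 0) / (1 - 0) = 1 := by norm_num
    rw [e] at he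
    rw [he]
    field_simp
    ring
  -- oddness : for z ≠ 1, f (-z) = - f z
  have hodd : ∀ z : F, z ≠ 1 → f (-z) = -f z := by
    intro z hz1
    have hz1' : z - 1 ≠ 0 := sub_ne_zero.mpr hz1
    have hpq : z + 1 ≠ z - 1 := by
      intro h
      exact h20 (by linear_combination h)
    set x : F := (z + 1) / (z - 1) with hx
    have hxy : x ≠ 1 := by
      rw [hx]
      intro h
      rw [div_eq_iff hz1'] at h
      exact h20 (by linear_combination h)
    obtain ⟨hi1, he1⟩ := hf hxy
    obtain ⟨hi2, he2⟩ := hf hxy.symm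
    have e1 : (x + 1) / (x - 1) = z := by
      rw [hx, sd_aux_div _ _ hz1' hpq]
      rw [show z + 1 + (z - 1) = 2 * z by ring, show z + 1 - (z - 1) = 2 by ring]
      exact mul_div_cancel_left₀ z h20
    have e2 : (1 + x) / (1 - x) = -z := by
      rw [show (1 : F) + x = x + 1 by ring, show (1 : F) - x = -(x - 1) by ring, div_neg, e1]
    rw [e1] at he1
    rw [e2] at he2
    rw [he2, he1]
    have hs : f x - f 1 ≠ 0 := sub_ne_zero.mpr hi1
    have hs2 : f 1 - f x ≠ 0 := sub_ne_zero.mpr hi2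
    field_simp
    ring
  -- The backward lemma
  have hB : ∀ x y : F, x ≠ y → f y = y → y ≠ 0 →
      f ((x + y) / (x - y)) = (x + y) / (x - y) → f x = x := by
    intro x y hxy hfy hy0 hz
    obtain ⟨hinj, heq⟩ := hf hxy
    rw [hfy] at hinj heq
    rw [hz] at heq
    have hxy' : x - y ≠ 0 := sub_ne_zero.mpr hxy
    have hw : f x - y ≠ 0 := sub_ne_zero.mpr hinj
    rw [div_eq_div_iff hxy' hw] at heq
    have h2 : y * 2 * (f x - x) = 0 := by linear_combination heq
    rcases mul_eq_zero.mp h2 with h | h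
    · exact absurd h (mul_ne_zero hy0 h20)
    · exact sub_eq_zero.mp h
  -- the ratio b = a / d
  set b : F := a / d with hbdef
  have hbd : ∀ m : ℤ, (b + (m : F)) * d = a + (m : F) * d := by
    intro m
    rw [add_mul, hbdef, div_mul_cancel₀ _ hd0]
  have hbm0 : ∀ m : ℤ, b + (m : F) ≠ 0 := by
    intro m h
    apply hne m
    rw [← hbd m, h, zero_mul]
  have hbm1 : ∀ m : ℤ, b + (m : F) ≠ 1 := by
    intro m h
    apply hne (m - 1)
    have h2 : (b + (m : F) - 1) * d = a + ((m : F) - 1) * d := by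
      rw [sub_mul, hbd m]; ring
    rw [h, sub_self, zero_mul] at h2
    push_cast
    exact h2.symm
  have hb0 : b ≠ 0 := by simpa using hbm0 0
  have hb1 : b ≠ 1 := by simpa using hbm1 0
  have had2 : a - d ≠ 0 := sub_ne_zero.mpr had'
  -- f b = b
  have hfb : f b = b := by
    apply hB b 1 hb1 f1 one_ne_zero
    have e : (b + 1) / (b - 1) = (a + d) / (a - d) := by
      rw [hbdef, sd_aux_div _ _ hd0 had']
    rw [e]
    obtain ⟨_, he⟩ := hf had'
    rw [ha, hd] at he
    exact he
  -- f (2b+1) = 2b+1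
  have hf2b1 : f (2 * b + 1) = 2 * b + 1 := by
    have hada : a + d ≠ a := by
      intro h; apply hd0; linear_combination h
    obtain ⟨_, he⟩ := hf hada
    rw [had, ha] at he
    have e : (a + d + a) / (a + d - a) = 2 * b + 1 := by
      rw [hbdef, show a + d + a = 2 * a + d by ring, show a + d - a = d by ring,
        div_eq_iff hd0]
      field_simp
    rw [e] at he
    exact he
  -- f (b+1) = b+1
  have hfb1 : f (b + 1) = b + 1 := by
    apply hB (b + 1) b (by intro h; exact one_ne_zero (α := F) (by linear_combination h)) hfb hb0
    have e : (b + 1 + b) / (b + 1 - b) = 2 * b + 1 := by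
      rw [show b + 1 + b = 2 * b + 1 by ring, show b + 1 - b = (1 : F) by ring, div_one]
    rw [e]
    exact hf2b1
  -- f fixes b + m for all integers m
  have hC2 : ∀ m : ℤ, f (b + (m : F)) = b + (m : F) ∧
      f (b + (m : F) + 1) = b + (m : F) + 1 := by
    intro m
    induction m using Int.induction_on with
    | zero =>
      refine ⟨key _ b (by push_cast; ring) hfb, key _ (b + 1) (by push_cast; ring) hfb1⟩
    | succ n ih =>
      obtain ⟨ih1, ih2⟩ := ih
      have hstep : f (b + ((n : ℤ) : F) + 2) = b + ((n : ℤ) : F) + 2 := by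
        apply hB (b + ((n : ℤ) : F) + 2) (b + ((n : ℤ) : F))
          (by intro h; exact h20 (by linear_combination h)) ih1 (hbm0 n)
        have e : (b + ((n : ℤ) : F) + 2 + (b + ((n : ℤ) : F))) / (b + ((n : ℤ) : F) + 2 - (b + ((n : ℤ) : F)))
            = b + ((n : ℤ) : F) + 1 := by
          rw [show b + ((n : ℤ) : F) + 2 + (b + ((n : ℤ) : F)) = 2 * (b + ((n : ℤ) : F) + 1) by ring,
            show b + ((n : ℤ) : F) + 2 - (b + ((n : ℤ) : F)) = (2 : F) by ring]
          exact mul_div_cancel_left₀ _ h20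
        rw [e]
        exact ih2
      exact ⟨key _ (b + ((n : ℤ) : F) + 1) (by push_cast; ring) ih2,
        key _ (b + ((n : ℤ) : F) + 2) (by push_cast; ring) hstep⟩
    | pred n ih =>
      obtain ⟨ih1, ih2⟩ := ih
      have ih1' : f (b + -((n : ℤ) : F)) = b + -((n : ℤ) : F) :=
        key _ (b + ((-n : ℤ) : F)) (by push_cast; ring) ih1
      have ih2' : f (b + -((n : ℤ) : F) + 1) = b + -((n : ℤ) : F) + 1 :=
        key _ (b + ((-n : ℤ) : F) + 1) (by push_cast; ring) ih2
      have hstep : f (b + -((n : ℤ) : F) - 1) = b + -((n : ℤ) : F) - 1 := by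
        apply hB (b + -((n : ℤ) : F) - 1) (b + -((n : ℤ) : F) + 1)
        · intro h
          exact h20 (by linear_combination -h)
        · exact ih2'
        · intro h
          push_cast at h
          apply hbm0 (-(n : ℤ) + 1)
          push_cast
          linear_combination h
        · have e : (b + -((n : ℤ) : F) - 1 + (b + -((n : ℤ) : F) + 1)) /
              (b + -((n : ℤ) : F) - 1 - (b + -((n : ℤ) : F) + 1)) = -(b + -((n : ℤ) : F)) := by
            rw [show b + -((n : ℤ) : F) - 1 + (b + -((n : ℤ) : F) + 1) = 2 * (b + -((n : ℤ) : F)) by ring,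
              show b + -((n : ℤ) : F) - 1 - (b + -((n : ℤ) : F) + 1) = -(2 : F) by ring]
            rw [div_neg, mul_div_cancel_left₀ _ h20]
          rw [e]
          have hne1 : b + -((n : ℤ) : F) ≠ 1 := by
            have h1 := hbm1 (-n)
            intro h
            push_cast at h h1
            exact h1 (by linear_combination h)
          rw [hodd _ hne1, ih1']
      exact ⟨key _ (b + -((n : ℤ) : F) - 1) (by push_cast; ring) hstep,
        key _ (b + -((n : ℤ) : F)) (by push_cast; ring) ih1'⟩
  have hC : ∀ m : ℤ, f (b + (m : F)) = b + (m : F) := fun m => (hC2 m).1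
  -- main induction
  have hu2 : ∀ n : ℤ, f (a + ((n : ℤ) : F) * d) = a + ((n : ℤ) : F) * d ∧
      f (a + (((n : ℤ) : F) + 1) * d) = a + (((n : ℤ) : F) + 1) * d := by
    intro n
    induction n using Int.induction_on with
    | zero =>
      refine ⟨key _ a (by push_cast; ring) ha, key _ (a + d) (by push_cast; ring) had⟩
    | succ n ih =>
      obtain ⟨ih1, ih2⟩ := ih
      have hstep : f (a + (((n : ℤ) : F) + 2) * d) = a + (((n : ℤ) : F) + 2) * d := by
        apply hB (a + (((n : ℤ) : F) + 2) * d) (a + ((n : ℤ) : F) * d)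
        · intro h
          have h2 : (2 : F) * d = 0 := by linear_combination h
          rcases mul_eq_zero.mp h2 with h' | h'
          · exact h20 h'
          · exact hd0 h'
        · exact ih1
        · exact hne (n : ℤ)
        · have e : (a + (((n : ℤ) : F) + 2) * d + (a + ((n : ℤ) : F) * d)) /
              (a + (((n : ℤ) : F) + 2) * d - (a + ((n : ℤ) : F) * d)) = b + (((n : ℤ) : F) + 1) := by
            rw [show a + (((n : ℤ) : F) + 2) * d + (a + ((n : ℤ) : F) * d)
                = 2 * ((a + (((n : ℤ) : F) + 1) * d)) by ring,
              show a + (((n : ℤ) : F) + 2) * d - (a + ((n : ℤ) : F) * d) = 2 * d by ring]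
            rw [mul_div_mul_left _ _ h20, hbdef, add_div]
            congr 1
            exact mul_div_cancel_right₀ _ hd0
          rw [e]
          exact key _ (b + ((n + 1 : ℤ) : F)) (by push_cast; ring) (hC (n + 1))
      exact ⟨key _ (a + (((n : ℤ) : F) + 1) * d) (by push_cast; ring) ih2,
        key _ (a + (((n : ℤ) : F) + 2) * d) (by push_cast; ring) hstep⟩
    | pred n ih =>
      obtain ⟨ih1, ih2⟩ := ih
      have ih1' : f (a + -((n : ℤ) : F) * d) = a + -((n : ℤ) : F) * d :=
        key _ (a + ((-n : ℤ) : F) * d) (by push_cast; ring) ih1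
      have ih2' : f (a + (-((n : ℤ) : F) + 1) * d) = a + (-((n : ℤ) : F) + 1) * d :=
        key _ (a + (((-n : ℤ) : F) + 1) * d) (by push_cast; ring) ih2
      have hstep : f (a + (-((n : ℤ) : F) - 1) * d) = a + (-((n : ℤ) : F) - 1) * d := by
        apply hB (a + (-((n : ℤ) : F) - 1) * d) (a + (-((n : ℤ) : F) + 1) * d)
        · intro h
          have h2 : (2 : F) * d = 0 := by linear_combination -h
          rcases mul_eq_zero.mp h2 with h' | h'
          · exact h20 h'
          · exact hd0 h'
        · exact ih2'
        · intro h
          push_cast at h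
          apply hne (-(n : ℤ) + 1)
          push_cast
          linear_combination h
        · have e : (a + (-((n : ℤ) : F) - 1) * d + (a + (-((n : ℤ) : F) + 1) * d)) /
              (a + (-((n : ℤ) : F) - 1) * d - (a + (-((n : ℤ) : F) + 1) * d)) = -(b + -((n : ℤ) : F)) := by
            rw [show a + (-((n : ℤ) : F) - 1) * d + (a + (-((n : ℤ) : F) + 1) * d)
                = 2 * (a + -((n : ℤ) : F) * d) by ring,
              show a + (-((n : ℤ) : F) - 1) * d - (a + (-((n : ℤ) : F) + 1) * d) = -(2 * d) by ring]
            rw [div_neg, mul_div_mul_left _ _ h20, hbdef]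
            congr 1
            rw [add_div]
            congr 1
            exact mul_div_cancel_right₀ _ hd0
          rw [e]
          have hne1 : b + -((n : ℤ) : F) ≠ 1 := by
            have h1 := hbm1 (-n)
            intro h
            push_cast at h h1
            exact h1 (by linear_combination h)
          rw [hodd _ hne1]
          rw [key _ (b + ((-n : ℤ) : F)) (by push_cast; ring) (hC (-n))]
      exact ⟨key _ (a + (-((n : ℤ) : F) - 1) * d) (by push_cast; ring) hstep,
        key _ (a + -((n : ℤ) : F) * d) (by push_cast; ring) ih1'⟩
  intro n
  exact (hu2 n).1
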